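/- arXiv:1803.01813 — 3 statements merged into one kernel-verified Lean document; each statement's English description precedes it below -/
import Mathlib

section
/- For all integers k ≥ 1, the inequality ∑_{ℓ=1}^{k} ((ℓ-1)k + 2ℓ)/ℓ! ≥ k holds. -/
open Finset

lemma sum_tel (k : ℕ) : ∑ ℓ ∈ Finset.Icc 1 k, ((ℓ : ℝ) - 1) / (Nat.factorial ℓ)
    = 1 - 1 / (Nat.factorial k) := by
  induction k with
  | zero => simp
  | succ n ih =>
    rcases Nat.eq_zero_or_pos n with h | h
    · subst h; simp
    · rw [Finset.sum_Icc_succ_top (by omega), ih]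
      have h1 : (Nat.factorial n : ℝ) ≠ 0 := by positivity
      have h2 : (Nat.factorial (n+1) : ℝ) ≠ 0 := by positivity
      have h3 : (Nat.factorial (n+1) : ℝ) = (n+1) * Nat.factorial n := by
        push_cast [Nat.factorial_succ]; ring
      field_simp
      rw [h3]
      push_cast; ring

theorem sum_ineq_one (k : ℕ) (hk : 1 ≤ k) :
    (k : ℝ) ≤ ∑ ℓ ∈ Finset.Icc 1 k,
      (((ℓ : ℝ) - 1) * k + 2 * ℓ) / (Nat.factorial ℓ) := by
  have hsplit : ∑ ℓ ∈ Finset.Icc 1 k, (((ℓ : ℝ) - 1) * k + 2 * ℓ) / (Nat.factorial ℓ)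
      = (k : ℝ) * (∑ ℓ ∈ Finset.Icc 1 k, ((ℓ : ℝ) - 1) / (Nat.factorial ℓ))
        + ∑ ℓ ∈ Finset.Icc 1 k, 2 * (ℓ : ℝ) / (Nat.factorial ℓ) := by
    rw [Finset.mul_sum, ← Finset.sum_add_distrib]
    apply Finset.sum_congr rfl
    intro ℓ _
    ring
  rw [hsplit, sum_tel]
  have hB : (2 : ℝ) ≤ ∑ ℓ ∈ Finset.Icc 1 k, 2 * (ℓ : ℝ) / (Nat.factorial ℓ) := by
    have : Finset.Icc 1 k = insert 1 (Finset.Icc 2 k) := by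
      ext x; simp [Finset.mem_Icc, Finset.mem_insert]; omega
    rw [this, Finset.sum_insert (by simp)]
    have : (0:ℝ) ≤ ∑ ℓ ∈ Finset.Icc 2 k, 2 * (ℓ : ℝ) / (Nat.factorial ℓ) := by
      apply Finset.sum_nonneg; intro i _; positivity
    simp [Nat.factorial]
    linarith
  have hkf : (k : ℝ) / (Nat.factorial k) ≤ 1 := by
    rw [div_le_one (by positivity)]
    exact_mod_cast Nat.self_le_factorial k
  have hkpos : (0:ℝ) < Nat.factorial k := by positivity
  have : (k : ℝ) * (1 - 1 / Nat.factorial k) = k - k / Nat.factorial k := by ring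
  rw [this]
  linarith
end

section
/- Let κ > 0 and define α_k(κ) by α_0 = 1, α_{k+1} = (κ/((k+1)(k+2))) ∑_{ℓ=0}^{k} α_{k-ℓ}/ℓ!. Suppose there is k₀ ≥ 1 with α_{k₀+1}(κ) < min_{k ≤ k₀} α_k(κ). Then α_{k+1}(κ) < α_k(κ) for all k ≥ k₀. -/
open Finset

lemma fact_sum (n : ℕ) :
    ∑ ℓ ∈ Finset.range n, (ℓ : ℝ) / (Nat.factorial (ℓ+1)) = 1 - 1 / (Nat.factorial n) := by
  induction n with
  | zero => simp
  | succ n ih =>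
    rw [Finset.sum_range_succ, ih, Nat.factorial_succ]
    have h : (Nat.factorial n : ℝ) ≠ 0 := Nat.cast_ne_zero.mpr (Nat.factorial_ne_zero n)
    push_cast
    field_simp
    ring

set_option maxHeartbeats 1000000 in
theorem alpha_decreasing (κ : ℝ) (hκ : 0 < κ) (α : ℕ → ℝ) (hα0 : α 0 = 1)
    (hrec : ∀ k : ℕ, α (k + 1) =
      κ / ((k + 1) * (k + 2)) *
        ∑ ℓ ∈ Finset.range (k + 1), α (k - ℓ) / (Nat.factorial ℓ))
    (k₀ : ℕ) (hk₀ : 1 ≤ k₀) (hmin : ∀ k ≤ k₀, α (k₀ + 1) < α k) :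
    ∀ k, k₀ ≤ k → α (k + 1) < α k := by
  have hpos : ∀ k, 0 < α k := by
    intro k
    induction k using Nat.strong_induction_on with
    | _ k ih =>
      match k with
      | 0 => simp [hα0]
      | k+1 =>
        rw [hrec k]
        apply mul_pos
        · apply div_pos hκ
          positivity
        · apply Finset.sum_pos
          · intro i hi
            exact div_pos (ih _ (by omega)) (by positivity)
          · exact ⟨0, Finset.mem_range.mpr (Nat.succ_pos k)⟩
  -- key step
  have key : ∀ k, 1 ≤ k → (∀ j ≤ k, α (k+1) < α j) → α (k+2) < α (k+1) := by
    intro k hk IH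
    set S : ℝ := ∑ ℓ ∈ Finset.range (k+1), α (k-ℓ) / (Nat.factorial ℓ) with hSdef
    set T : ℝ := ∑ ℓ ∈ Finset.range (k+1), α (k-ℓ) / (Nat.factorial (ℓ+1)) with hTdef
    set F : ℝ := (Nat.factorial (k+1) : ℝ) with hFdef
    have hfpos : (0:ℝ) < F := by positivity
    have hF0 : F ≠ 0 := ne_of_gt hfpos
    have hfge : ((k:ℝ)+1) ≤ F := by
      rw [hFdef]
      exact_mod_cast Nat.self_le_factorial (k+1)
    clear_value F
    have hα1 := hrec k
    rw [show (∑ ℓ ∈ Finset.range (k+1), α (k-ℓ) / (Nat.factorial ℓ : ℝ)) = S from rfl] at hα1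
    clear_value S T
    -- S ≥ α k + α (k-1)
    have hsub : ({0, 1} : Finset ℕ) ⊆ Finset.range (k+1) := by
      intro x hx
      fin_cases hx <;> simp [Finset.mem_range] <;> omega
    have hS2' : α k + α (k-1) ≤ S := by
      have h : ∑ i ∈ ({0,1} : Finset ℕ), α (k-i) / (Nat.factorial i : ℝ) ≤ S := by
        rw [hSdef]
        apply Finset.sum_le_sum_of_subset_of_nonneg hsub
        intro i _ _
        exact div_nonneg (hpos _).le (by positivity)
      rw [Finset.sum_pair (by norm_num : (0:ℕ) ≠ 1)] at h
      simpa [Nat.factorial] using h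
    have hS2 : 2 * α (k+1) < S := by
      have h0 := IH k le_rfl
      have h1 := IH (k-1) (by omega)
      linarith
    have heq : κ * S = α (k+1) * (((k:ℝ)+1)*((k:ℝ)+2)) := by
      rw [hα1]; field_simp
    have hκ2 : κ * 2 < ((k:ℝ)+1)*((k:ℝ)+2) := by
      nlinarith [mul_lt_mul_of_pos_left hS2 hκ, hpos (k+1)]
    -- termwise bound
    have hterm : ∀ ℓ ∈ Finset.range (k+1),
        α (k+1) * ((ℓ:ℝ) / (Nat.factorial (ℓ+1))) ≤
          α (k-ℓ) / (Nat.factorial ℓ) - α (k-ℓ) / (Nat.factorial (ℓ+1)) := by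
      intro ℓ hℓ
      have hne : (Nat.factorial ℓ : ℝ) ≠ 0 := by positivity
      have h1 : α (k-ℓ) / (Nat.factorial ℓ) - α (k-ℓ) / (Nat.factorial (ℓ+1)) =
          α (k-ℓ) * ((ℓ:ℝ) / (Nat.factorial (ℓ+1))) := by
        rw [Nat.factorial_succ]
        push_cast
        field_simp
        ring
      rw [h1]
      exact mul_le_mul_of_nonneg_right (le_of_lt (IH (k-ℓ) (by omega))) (by positivity)
    have h1mem : (1:ℕ) ∈ Finset.range (k+1) := Finset.mem_range.mpr (by omega)
    have hstrict : α (k+1) * ((1:ℕ):ℝ) / (Nat.factorial (1+1)) <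
        α (k-1) / (Nat.factorial 1) - α (k-1) / (Nat.factorial (1+1)) := by
      have := IH (k-1) (by omega)
      norm_num [Nat.factorial]
      linarith
    have hST : α (k+1) * (1 - 1/F) < S - T := by
      have hlt : ∑ ℓ ∈ Finset.range (k+1), α (k+1) * ((ℓ:ℝ) / (Nat.factorial (ℓ+1))) <
          ∑ ℓ ∈ Finset.range (k+1), (α (k-ℓ) / (Nat.factorial ℓ) - α (k-ℓ) / (Nat.factorial (ℓ+1))) := by
        apply Finset.sum_lt_sum hterm
        exact ⟨1, h1mem, by rw [mul_div_assoc] at hstrict; exact hstrict⟩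
      rw [← Finset.mul_sum, fact_sum] at hlt
      rw [hSdef, hTdef, hFdef]
      simpa using hlt
    have hST' : α (k+1) * F - α (k+1) < (S - T) * F := by
      have h := mul_lt_mul_of_pos_right hST hfpos
      have hinv2 : α (k+1) * (1/F) * F = α (k+1) := by field_simp
      nlinarith [h, hinv2]
    -- recursion at k+1
    have hα2 := hrec (k+1)
    rw [Finset.sum_range_succ'] at hα2
    simp only [Nat.succ_sub_succ, Nat.sub_zero, Nat.factorial_zero, Nat.cast_one, div_one] at hα2
    push_cast at hα2
    rw [← hTdef] at hα2
    -- hα2 : α (k+2) = κ / ((k+2)*(k+3)) * (T + α (k+1))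
    have hd2 : (0:ℝ) < (((k:ℝ)+1)+1)*(((k:ℝ)+1)+2) := by positivity
    rw [hα2, div_mul_eq_mul_div, div_lt_iff₀ hd2]
    -- goal : κ * (T + α (k+1)) < α (k+1) * ((k+2)*(k+3))
    have h1 : κ * (T*F) < κ*S*F - κ*(α (k+1))*F + κ*α (k+1) := by
      nlinarith [mul_lt_mul_of_pos_left hST' hκ]
    have h2 : κ*S*F = α (k+1) * (((k:ℝ)+1)*((k:ℝ)+2)) * F := by rw [heq]
    have hcut : κ < 2*(((k:ℝ)+2)*F) := by
      nlinarith [mul_le_mul_of_nonneg_right hfge (by positivity : (0:ℝ) ≤ (k:ℝ)+2),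
        mul_pos (by positivity : (0:ℝ) < (k:ℝ)+2) hfpos]
    rw [← mul_lt_mul_iff_of_pos_right hfpos]
    nlinarith [h1, h2, mul_lt_mul_of_pos_right hcut (hpos (k+1)), hpos (k+1), hfpos]
  -- main induction
  have main : ∀ k, k₀ ≤ k → ∀ j ≤ k, α (k+1) < α j := by
    intro k hk
    induction k with
    | zero => omega
    | succ k ih =>
      rcases Nat.lt_or_ge k₀ (k+1) with h | h
      · have hk' : k₀ ≤ k := by omega
        have ihk := ih hk'
        have hkey := key k (by omega) ihk
        intro j hj
        rcases Nat.eq_or_lt_of_le hj with rfl | hj'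
        · exact hkey
        · exact lt_trans hkey (ihk j (by omega))
      · have : k₀ = k+1 := by omega
        subst this
        exact hmin
  intro k hk
  exact main k hk k le_rfl
end

section
/- Define ω_0(r) = 1 and ω_{k+1}(r) = ∫_r^∞ ∫_s^∞ (e^{-t}/t) ω_k(t) dt ds for r > 0. Then for all k ≥ 1 and all r ≥ 1, 0 < ω_k(r) ≤ e^{-kr}/(k!)². -/
open MeasureTheory Real

lemma integral_exp_neg_mul_Ioi' {b : ℝ} (hb : 0 < b) (a : ℝ) :
    ∫ x in Set.Ioi a, Real.exp (-b * x) = Real.exp (-b * a) / b := by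
  have hderiv : ∀ x ∈ Set.Ici a, HasDerivAt (fun x => -Real.exp (-b * x) / b)
      (Real.exp (-b * x)) x := by
    intro x _
    have h1 : HasDerivAt (fun x : ℝ => -b * x) (-b) x := by
      simpa using (hasDerivAt_id x).const_mul (-b)
    have h3 : HasDerivAt (fun x => -Real.exp (-b * x) / b) (-(Real.exp (-b * x) * -b) / b) x :=
      (h1.exp.neg).div_const b
    convert h3 using 1
    rw [eq_div_iff hb.ne']; ring
  have htend : Filter.Tendsto (fun x : ℝ => -Real.exp (-b * x) / b) Filter.atTop (nhds 0) := by
    have h1 : Filter.Tendsto (fun x : ℝ => -b * x) Filter.atTop Filter.atBot :=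
      Filter.Tendsto.const_mul_atTop_of_neg (neg_neg_iff_pos.mpr hb) Filter.tendsto_id
    have h2 := Real.tendsto_exp_atBot.comp h1
    simpa using (h2.neg).div_const b
  have := integral_Ioi_of_hasDerivAt_of_tendsto' hderiv (exp_neg_integrableOn_Ioi a hb) htend
  rw [this]; ring

lemma step_integral (f : ℝ → ℝ) (A B a b : ℝ) (ha : 0 < a) (hb : 0 < b) (hA : 0 ≤ A)
    (hmeas : ∀ s : ℝ, 1 ≤ s → AEStronglyMeasurable f (volume.restrict (Set.Ioi s)))
    (hlb : ∀ t : ℝ, 1 ≤ t → A * Real.exp (-a * t) ≤ f t)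
    (hub : ∀ t : ℝ, 1 ≤ t → f t ≤ B * Real.exp (-b * t)) :
    (∀ r : ℝ, 1 ≤ r → A / a * Real.exp (-a * r) ≤ (∫ t in Set.Ioi r, f t) ∧
        (∫ t in Set.Ioi r, f t) ≤ B / b * Real.exp (-b * r)) ∧
    AntitoneOn (fun r => ∫ t in Set.Ioi r, f t) (Set.Ici 1) ∧
    (∀ s : ℝ, 1 ≤ s →
      AEStronglyMeasurable (fun r => ∫ t in Set.Ioi r, f t) (volume.restrict (Set.Ioi s))) := by
  have hint : ∀ s : ℝ, 1 ≤ s → IntegrableOn f (Set.Ioi s) := by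
    intro s hs
    refine Integrable.mono' ((exp_neg_integrableOn_Ioi s hb).const_mul B) (hmeas s hs) ?_
    refine (ae_restrict_iff' measurableSet_Ioi).2 (Filter.Eventually.of_forall fun t ht => ?_)
    have ht1 : 1 ≤ t := hs.trans (le_of_lt ht)
    rw [Real.norm_eq_abs, abs_of_nonneg (le_trans (by positivity) (hlb t ht1))]
    exact hub t ht1
  have hnn : ∀ s : ℝ, 1 ≤ s → 0 ≤ᵐ[volume.restrict (Set.Ioi s)] f := fun s hs =>
    (ae_restrict_iff' measurableSet_Ioi).2 (Filter.Eventually.of_forall fun t ht =>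
      le_trans (by positivity) (hlb t (hs.trans (le_of_lt ht))))
  have hbound : ∀ r : ℝ, 1 ≤ r → A / a * Real.exp (-a * r) ≤ (∫ t in Set.Ioi r, f t) ∧
      (∫ t in Set.Ioi r, f t) ≤ B / b * Real.exp (-b * r) := by
    intro r hr
    constructor
    · calc A / a * Real.exp (-a * r) = ∫ t in Set.Ioi r, A * Real.exp (-a * t) := by
            rw [MeasureTheory.integral_const_mul, integral_exp_neg_mul_Ioi' ha]; ring
        _ ≤ ∫ t in Set.Ioi r, f t :=
            integral_mono_of_nonneg
              (Filter.Eventually.of_forall fun t => by positivity)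
              (hint r hr)
              ((ae_restrict_iff' measurableSet_Ioi).2 (Filter.Eventually.of_forall fun t ht =>
                hlb t (hr.trans (le_of_lt ht))))
    · calc (∫ t in Set.Ioi r, f t) ≤ ∫ t in Set.Ioi r, B * Real.exp (-b * t) :=
            integral_mono_of_nonneg (hnn r hr) ((exp_neg_integrableOn_Ioi r hb).const_mul B)
              ((ae_restrict_iff' measurableSet_Ioi).2 (Filter.Eventually.of_forall fun t ht =>
                hub t (hr.trans (le_of_lt ht))))
        _ = B / b * Real.exp (-b * r) := by
            rw [MeasureTheory.integral_const_mul, integral_exp_neg_mul_Ioi' hb]; ring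
  have hanti : AntitoneOn (fun r => ∫ t in Set.Ioi r, f t) (Set.Ici 1) := by
    intro s hs s' _ hss'
    exact setIntegral_mono_set (hint s hs) (hnn s hs)
      (HasSubset.Subset.eventuallyLE (Set.Ioi_subset_Ioi hss'))
  refine ⟨hbound, hanti, fun s hs => ?_⟩
  have hJ : Antitone (fun r : ℝ => ∫ t in Set.Ioi (max r 1), f t) := fun r1 r2 h =>
    hanti (Set.mem_Ici.mpr (le_max_right _ _)) (Set.mem_Ici.mpr (le_max_right _ _))
      (max_le_max h le_rfl)
  refine hJ.measurable.aestronglyMeasurable.congr ?_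
  refine (ae_restrict_iff' measurableSet_Ioi).2 (Filter.Eventually.of_forall fun r hrr => ?_)
  simp only [max_eq_left (hs.trans (le_of_lt hrr))]

theorem omega_bounds (ω : ℕ → ℝ → ℝ) (hω0 : ∀ r, ω 0 r = 1)
    (hrec : ∀ k : ℕ, ∀ r : ℝ, 0 < r → ω (k + 1) r =
      ∫ s in Set.Ioi r, ∫ t in Set.Ioi s, Real.exp (-t) / t * ω k t) :
    ∀ k : ℕ, 1 ≤ k → ∀ r : ℝ, 1 ≤ r →
      0 < ω k r ∧ ω k r ≤ Real.exp (-(k : ℝ) * r) / (Nat.factorial k : ℝ) ^ 2 := by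
  have key : ∀ k : ℕ,
      (∀ r : ℝ, 1 ≤ r →
        1 / ((4:ℝ)^k * (Nat.factorial k : ℝ)^2) * Real.exp (-(2*(k:ℝ)+2*0) * r) ≤ ω k r ∧
        ω k r ≤ 1 / ((Nat.factorial k : ℝ)^2) * Real.exp (-(k:ℝ) * r)) ∧
      AntitoneOn (ω k) (Set.Ici 1) ∧
      (∀ s : ℝ, 1 ≤ s → AEStronglyMeasurable (ω k) (volume.restrict (Set.Ioi s))) := by
    intro k
    induction k with
    | zero =>
      have hconst : ω 0 = fun _ => (1:ℝ) := funext hω0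
      refine ⟨fun r hr => ?_, ?_, fun s hs => ?_⟩
      · simp [hω0]
      · intro x _ y _ _; simp [hω0]
      · rw [hconst]; exact aestronglyMeasurable_const
    | succ k ih =>
      obtain ⟨hbd, hanti, hmeasω⟩ := ih
      have hfk : (0:ℝ) < (Nat.factorial k : ℝ) := by
        exact_mod_cast Nat.factorial_pos k
      have hmeasf : ∀ s : ℝ, 1 ≤ s →
          AEStronglyMeasurable (fun t => Real.exp (-t) / t * ω k t)
            (volume.restrict (Set.Ioi s)) := fun s hs =>
        (((Real.measurable_exp.comp measurable_neg).div measurable_id).aestronglyMeasurable).mul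
          (hmeasω s hs)
      have hflb : ∀ t : ℝ, 1 ≤ t →
          1/((4:ℝ)^k * (Nat.factorial k : ℝ)^2) * Real.exp (-(2*(k:ℝ)+2) * t) ≤
            Real.exp (-t) / t * ω k t := by
        intro t ht
        have ht0 : (0:ℝ) < t := by linarith
        have h1 : Real.exp (-t) ≤ 1/t := by
          rw [Real.exp_neg, inv_eq_one_div]
          exact one_div_le_one_div_of_le ht0
            ((by linarith : t ≤ t+1).trans (Real.add_one_le_exp t))
        have h2 : Real.exp (-(2:ℝ)*t) ≤ Real.exp (-t)/t := by
          calc Real.exp (-(2:ℝ)*t) = Real.exp (-t) * Real.exp (-t) := by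
                rw [← Real.exp_add]; congr 1; ring
            _ ≤ Real.exp (-t) * (1/t) := mul_le_mul_of_nonneg_left h1 (Real.exp_pos _).le
            _ = Real.exp (-t)/t := by ring
        calc 1/((4:ℝ)^k * (Nat.factorial k : ℝ)^2) * Real.exp (-(2*(k:ℝ)+2) * t)
            = Real.exp (-(2:ℝ)*t) *
              (1/((4:ℝ)^k * (Nat.factorial k : ℝ)^2) * Real.exp (-(2*(k:ℝ)+2*0) * t)) := by
              rw [show (-(2*(k:ℝ)+2) * t) = (-(2:ℝ)*t) + (-(2*(k:ℝ)+2*0) * t) by ring,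
                Real.exp_add]; ring
          _ ≤ (Real.exp (-t)/t) * ω k t :=
              mul_le_mul h2 (hbd t ht).1 (by positivity)
                (div_nonneg (Real.exp_pos _).le ht0.le)
      have hfub : ∀ t : ℝ, 1 ≤ t →
          Real.exp (-t) / t * ω k t ≤
            1/((Nat.factorial k : ℝ)^2) * Real.exp (-((k:ℝ)+1) * t) := by
        intro t ht
        have ht0 : (0:ℝ) < t := by linarith
        have hω_nn : 0 ≤ ω k t := le_trans (by positivity) (hbd t ht).1
        calc Real.exp (-t)/t * ω k t
            ≤ Real.exp (-t) * (1/((Nat.factorial k : ℝ)^2) * Real.exp (-(k:ℝ)*t)) :=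
              mul_le_mul (div_le_self (Real.exp_pos _).le ht) (hbd t ht).2 hω_nn
                (Real.exp_pos _).le
          _ = 1/((Nat.factorial k : ℝ)^2) * Real.exp (-((k:ℝ)+1) * t) := by
              rw [show (-((k:ℝ)+1) * t) = (-t) + (-(k:ℝ)*t) by ring, Real.exp_add]; ring
      have ha : (0:ℝ) < 2*(k:ℝ)+2 := by positivity
      have hb : (0:ℝ) < (k:ℝ)+1 := by positivity
      obtain ⟨hIbd, hIanti, hImeas⟩ := step_integral (fun t => Real.exp (-t) / t * ω k t)
        (1/((4:ℝ)^k * (Nat.factorial k : ℝ)^2)) (1/((Nat.factorial k : ℝ)^2))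
        (2*(k:ℝ)+2) ((k:ℝ)+1) ha hb (by positivity) hmeasf hflb hfub
      obtain ⟨hJbd, hJanti, hJmeas⟩ := step_integral
        (fun s => ∫ t in Set.Ioi s, Real.exp (-t) / t * ω k t)
        (1/((4:ℝ)^k * (Nat.factorial k : ℝ)^2) / (2*(k:ℝ)+2))
        (1/((Nat.factorial k : ℝ)^2) / ((k:ℝ)+1))
        (2*(k:ℝ)+2) ((k:ℝ)+1) ha hb (by positivity) hImeas
        (fun t ht => (hIbd t ht).1) (fun t ht => (hIbd t ht).2)
      have hrw : ∀ r : ℝ, 1 ≤ r →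
          ω (k+1) r = ∫ s in Set.Ioi r, ∫ t in Set.Ioi s, Real.exp (-t) / t * ω k t :=
        fun r hr => hrec k r (by linarith)
      refine ⟨fun r hr => ?_, ?_, fun s hs => ?_⟩
      · rw [hrw r hr]
        have h := hJbd r hr
        constructor
        · refine le_trans (le_of_eq ?_) h.1
          push_cast [Nat.factorial_succ]
          rw [show (-(2*((k:ℝ)+1)+2*0) * r) = (-(2*(k:ℝ)+2) * r) by ring]
          have h4 : ((4:ℝ)^k) ≠ 0 := by positivity
          have hk1 : ((k:ℝ)+1) ≠ 0 := by positivity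
          field_simp
          ring
        · refine le_trans h.2 (le_of_eq ?_)
          push_cast [Nat.factorial_succ]
          rw [show (-((k:ℝ)+1) * r) = (-((k:ℝ)+1) * r) from rfl]
          have hk1 : ((k:ℝ)+1) ≠ 0 := by positivity
          field_simp
      · intro x hx y hy hxy
        rw [hrw x hx, hrw y hy]
        exact hJanti hx hy hxy
      · refine (hJmeas s hs).congr ?_
        refine (ae_restrict_iff' measurableSet_Ioi).2 (Filter.Eventually.of_forall fun r hrr => ?_)
        exact (hrec k r (by have := hs.trans (le_of_lt hrr); linarith)).symm
  intro k _ r hr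
  obtain ⟨hbd, -, -⟩ := key k
  obtain ⟨hlo, hhi⟩ := hbd r hr
  refine ⟨lt_of_lt_of_le (by positivity) hlo, ?_⟩
  rw [one_div, inv_mul_eq_div] at hhi
  exact hhi
end
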